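/- Let 𝒦 ⊆ {−K,…,K} with m = |𝒦| ≥ 3. Let {(x_i,v_i)}_{i=1}^m be a configuration of m distinct particles in Ω admitting m pairwise distinct ghost particles {(g_j,w_j)}_{j=1}^m with respect to 𝒦, and suppose that for every k ∈ 𝒦 and every i ∈ {1,…,m} the set L_{i,k} contains exactly one of the ghost particles (g_j,w_j). Then the two sets {(x_i,v_i) : i = 1,…,m} and {(g_j,w_j) : j = 1,…,m} do not coincide; equivalently, the signed measure h = Σ_{i=1}^m δ_{(x_i,v_i)} − Σ_{j=1}^m δ_{(g_j,w_j)} is nonzero. -/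

import Mathlib

open MeasureTheory Complex Real Set

noncomputable section

/-- Phase space: positions and velocities in `ℝ^d`. -/
abbrev PS (d : ℕ) := (Fin d → ℝ) × (Fin d → ℝ)

/-- The phase-space domain `Ω`. -/
def Omega (d K : ℕ) (τ : ℝ) : Set (PS d) :=
  {p | ∀ k : ℤ, |k| ≤ (K : ℤ) → ∀ j, p.1 j + (k : ℝ) * τ * p.2 j ∈ Set.Icc (0 : ℝ) 1}

/-- The affine set `L_{i,k}` attached to a particle `p₀` and a time sample `k`. -/
def Lset (d K : ℕ) (τ : ℝ) (p₀ : PS d) (k : ℤ) : Set (PS d) :=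
  {p ∈ Omega d K τ | ∀ j, (p.1 j - p₀.1 j) + (k : ℝ) * τ * (p.2 j - p₀.2 j) = 0}

/-- `g` is a ghost particle of the configuration `P` with respect to the
set of time samples `Ks`. -/
def IsGhost {d K N : ℕ} (τ : ℝ) (P : Fin N → PS d) (Ks : Finset ℤ) (g : PS d) : Prop :=
  g ∈ Omega d K τ ∧ ∃ ι : ℤ → Fin N, Set.InjOn ι (Ks : Set ℤ) ∧
    (⋂ k ∈ Ks, Lset d K τ (P (ι k)) k) = {g}

/-- Integral of a complex function against a complex measure, via the Jordan
decompositions of the real and imaginary parts. -/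
def cintegral {α : Type*} [MeasurableSpace α] (μ : ComplexMeasure α) (f : α → ℂ) : ℂ :=
  ((∫ x, f x ∂(ComplexMeasure.re μ).toJordanDecomposition.posPart)
      - ∫ x, f x ∂(ComplexMeasure.re μ).toJordanDecomposition.negPart)
    + Complex.I * ((∫ x, f x ∂(ComplexMeasure.im μ).toJordanDecomposition.posPart)
      - ∫ x, f x ∂(ComplexMeasure.im μ).toJordanDecomposition.negPart)

/-- The total variation norm of a complex measure, defined by duality against
continuous functions bounded by one. -/
def tvNorm {α : Type*} [MeasurableSpace α] [TopologicalSpace α] (μ : ComplexMeasure α) : ℝ :=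
  sSup {r | ∃ f : α → ℂ, Continuous f ∧ (∀ x, ‖f x‖ ≤ 1) ∧ r = ‖cintegral μ f‖}

/-- A complex measure is supported on a set `S` if it vanishes on measurable sets
disjoint from `S`. -/
def SupportedOn {α : Type*} [MeasurableSpace α] (μ : ComplexMeasure α) (S : Set α) : Prop :=
  ∀ t : Set α, MeasurableSet t → Disjoint t S → μ t = 0

/-- The Dirac measure at a point, as a complex measure. -/
def cdirac {α : Type*} [MeasurableSpace α] (a : α) : ComplexMeasure α :=
  (MeasureTheory.Measure.dirac a).toSignedMeasure.toComplexMeasure 0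

/-- The test function `p ↦ e^{-2πi l·(x + kτv)}`. -/
def testFn (d : ℕ) (τ : ℝ) (l : Fin d → ℤ) (k : ℤ) : PS d → ℂ :=
  fun p => Complex.exp (-(2 * (π : ℂ) * Complex.I) *
    ∑ j, (l j : ℂ) * ((p.1 j : ℂ) + (k : ℂ) * (τ : ℂ) * (p.2 j : ℂ)))

/-- The measurement `(𝒢 μ)_{l,k}`. -/
def Gmeas {d : ℕ} (τ : ℝ) (μ : ComplexMeasure (PS d)) (l : Fin d → ℤ) (k : ℤ) : ℂ :=
  cintegral μ (testFn d τ l k)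

/-- Two complex measures give the same measurements for all allowed frequencies
`‖l‖_∞ ≤ f_c` and time samples `|k| ≤ K`. -/
def SameMeas {d : ℕ} (K : ℕ) (τ : ℝ) (f_c : ℕ) (μ ν : ComplexMeasure (PS d)) : Prop :=
  ∀ l : Fin d → ℤ, (∀ j, |l j| ≤ (f_c : ℤ)) → ∀ k : ℤ, |k| ≤ (K : ℤ) →
    Gmeas τ μ l k = Gmeas τ ν l k

/-- The set of allowed frequencies `l ∈ ℤ^d`, `‖l‖_∞ ≤ f_c`. -/
def freqSet (d : ℕ) (f_c : ℕ) : Finset (Fin d → ℤ) :=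
  Fintype.piFinset fun _ => Finset.Icc (-(f_c : ℤ)) (f_c : ℤ)

/-- A function on phase space has dynamical form. -/
def DynamicalForm (d K : ℕ) (τ : ℝ) (f_c : ℕ) (q : PS d → ℂ) : Prop :=
  ∃ c : ℤ → (Fin d → ℤ) → ℂ, ∀ p : PS d,
    q p = ∑ k ∈ Finset.Icc (-(K : ℤ)) (K : ℤ), ∑ l ∈ freqSet d f_c,
      c k l * Complex.exp ((2 * (π : ℂ) * Complex.I) *
        ∑ j, (l j : ℂ) * ((p.1 j : ℂ) + (k : ℂ) * (τ : ℂ) * (p.2 j : ℂ)))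

/-- The canonical embedding of `𝕂` (either `ℝ` or `ℂ`) into `ℂ`. -/
def toC {𝕜 : Type*} [RCLike 𝕜] (a : 𝕜) : ℂ :=
  (RCLike.re a : ℝ) + (RCLike.im a : ℝ) * Complex.I


/-- If each `L_{i,k}` contains exactly one of the `m` ghost particles of
an `m`-particle configuration (`m = |𝒦| ≥ 3`), then the set of particles and the set of
ghost particles do not coincide; equivalently `h = ∑ δ_{(x_i,v_i)} − ∑ δ_{(g_j,w_j)} ≠ 0`. -/

lemma self_mem_Lset {d K : ℕ} {τ : ℝ} {p₀ : PS d} (h : p₀ ∈ Omega d K τ) (k : ℤ) :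
    p₀ ∈ Lset d K τ p₀ k := by
  refine ⟨h, fun j => by ring⟩

lemma eval_sum {α : Type*} [MeasurableSpace α] {n : ℕ} (f : Fin n → ComplexMeasure α)
    (s : Set α) : (∑ i, f i) s = ∑ i, f i s := by
  let ev : ComplexMeasure α →+ ℂ :=
    { toFun := fun μ => μ s, map_zero' := rfl, map_add' := fun _ _ => rfl }
  exact map_sum ev f Finset.univ

open scoped Classical in
lemma cdirac_apply {α : Type*} [MeasurableSpace α] (a : α) {s : Set α}
    (hs : MeasurableSet s) : cdirac a s = if a ∈ s then 1 else 0 := by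
  have h1 : cdirac a s = Complex.mk ((MeasureTheory.Measure.dirac a).toSignedMeasure s)
      ((0 : SignedMeasure α) s) := rfl
  rw [h1]
  rw [MeasureTheory.Measure.toSignedMeasure_apply_measurable hs, measureReal_def,
    MeasureTheory.Measure.dirac_apply' a hs]
  by_cases h : a ∈ s
  · simp [h, Set.indicator_of_mem h, Complex.ext_iff]
  · simp [h, Set.indicator_of_notMem h, Complex.ext_iff]

theorem ghost_difference_nonzero
    {d K : ℕ} (hd : 1 ≤ d) (τ : ℝ) (hτ : 0 < τ)
    (Ks : Finset ℤ) (hKs : Ks ⊆ Finset.Icc (-(K : ℤ)) (K : ℤ)) (hcard : 3 ≤ Ks.card)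
    (P G : Fin Ks.card → PS d)
    (hPmem : ∀ i, P i ∈ Omega d K τ) (hPdist : Function.Injective P)
    (hGmem : ∀ j, G j ∈ Omega d K τ) (hGdist : Function.Injective G)
    (hghost : ∀ j, IsGhost (K := K) τ P Ks (G j))
    (huniq : ∀ k ∈ Ks, ∀ i : Fin Ks.card, ∃! j : Fin Ks.card, G j ∈ Lset d K τ (P i) k) :
    Set.range P ≠ Set.range G ∧
      (∑ i, cdirac (P i)) - (∑ j, cdirac (G j)) ≠ (0 : ComplexMeasure (PS d)) := by
  have hrange : Set.range P ≠ Set.range G := by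
    intro heq
    have hpos : 0 < Ks.card := by omega
    set j0 : Fin Ks.card := ⟨0, hpos⟩ with hj0
    obtain ⟨hΩ, ι, hιinj, hInt⟩ := hghost j0
    have hGmemL : ∀ k ∈ Ks, G j0 ∈ Lset d K τ (P (ι k)) k := by
      intro k hk
      have : G j0 ∈ (⋂ k ∈ Ks, Lset d K τ (P (ι k)) k) := by
        rw [hInt]; exact rfl
      exact Set.mem_iInter₂.mp this k hk
    have hkey : ∀ k ∈ Ks, P (ι k) = G j0 := by
      intro k hk
      have hmem : P (ι k) ∈ Set.range G := heq ▸ Set.mem_range_self _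
      obtain ⟨j', hj'⟩ := hmem
      have hj'mem : G j' ∈ Lset d K τ (P (ι k)) k := by
        rw [hj']; exact self_mem_Lset (hPmem _) k
      obtain ⟨j'', _, huj⟩ := huniq k hk (ι k)
      have h1 : j' = j'' := huj j' hj'mem
      have h2 : j0 = j'' := huj j0 (hGmemL k hk)
      rw [← hj', h1, ← h2]
    obtain ⟨a, ha, b, hb, hab⟩ := Finset.one_lt_card.mp (by omega : 1 < Ks.card)
    have : ι a = ι b := hPdist (by rw [hkey a ha, hkey b hb])
    exact hab (hιinj ha hb this)
  refine ⟨hrange, fun h0 => hrange ?_⟩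
  have heq : (∑ i, cdirac (P i)) = (∑ j, cdirac (G j)) := sub_eq_zero.mp h0
  have hcount : ∀ x : PS d,
      (∑ i, if P i = x then (1 : ℂ) else 0) = ∑ j, if G j = x then (1 : ℂ) else 0 := by
    intro x
    have hms : MeasurableSet ({x} : Set (PS d)) := measurableSet_singleton x
    have := congrArg (fun μ : ComplexMeasure (PS d) => μ {x}) heq
    simp only [eval_sum] at this
    calc (∑ i, if P i = x then (1 : ℂ) else 0) = ∑ i, cdirac (P i) {x} := by
          refine Finset.sum_congr rfl fun i _ => ?_
          rw [cdirac_apply _ hms]; simp [Set.mem_singleton_iff]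
      _ = ∑ j, cdirac (G j) {x} := this
      _ = ∑ j, if G j = x then (1 : ℂ) else 0 := by
          refine Finset.sum_congr rfl fun j _ => ?_
          rw [cdirac_apply _ hms]; simp [Set.mem_singleton_iff]
  have hexP : ∀ x : PS d, (∃ i, P i = x) ↔ (∃ j, G j = x) := by
    intro x
    constructor
    · rintro ⟨i, hi⟩
      by_contra hno
      push_neg at hno
      have hr : (∑ j, if G j = x then (1 : ℂ) else 0) = 0 := by
        refine Finset.sum_eq_zero fun j _ => by simp [hno j]
      have hl : (∑ i', if P i' = x then (1 : ℂ) else 0) = 1 := by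
        have : ∀ i', (if P i' = x then (1 : ℂ) else 0) = if i' = i then 1 else 0 := by
          intro i'
          have h : P i' = x ↔ i' = i := by rw [← hi]; exact hPdist.eq_iff
          simp [h]
        simp only [this, Finset.sum_ite_eq', Finset.mem_univ, if_true]
      rw [hcount x, hr] at hl
      exact one_ne_zero hl.symm
    · rintro ⟨j, hj⟩
      by_contra hno
      push_neg at hno
      have hl : (∑ i, if P i = x then (1 : ℂ) else 0) = 0 :=
        Finset.sum_eq_zero fun i _ => by simp [hno i]
      have hr : (∑ j', if G j' = x then (1 : ℂ) else 0) = 1 := by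
        have : ∀ j', (if G j' = x then (1 : ℂ) else 0) = if j' = j then 1 else 0 := by
          intro j'
          have h : G j' = x ↔ j' = j := by rw [← hj]; exact hGdist.eq_iff
          simp [h]
        simp only [this, Finset.sum_ite_eq', Finset.mem_univ, if_true]
      rw [hcount x, hr] at hl
      exact one_ne_zero hl
  ext x
  simp only [Set.mem_range]
  exact hexP x

end
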